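/- Let 𝒜 = {a,b,c,d} and let ω^G be the Grigorchuk substitution sequence. Let Ω = Z(ω^G,σ). Then there exist a countable set Ω₁ ⊆ Ω and a continuous surjection f : Ω → ℤ₂ such that: (1) f(σx) = f(x) + 1 for every x ∈ Ω; (2) the complement Ω \ Ω₁ is invariant under σ (i.e. σ(Ω \ Ω₁) ⊆ Ω \ Ω₁); and (3) the restriction of f to Ω \ Ω₁ is injective. In other words, the subshift σ|_Ω is, up to a countable set, continuously conjugated to the binary odometer. -/

import Mathlib

/-- The four-letter alphabet 𝒜 = {a,b,c,d}. -/
inductive A : Type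
  | a | b | c | d
  deriving DecidableEq

instance : TopologicalSpace A := ⊥
instance : DiscreteTopology A := ⟨rfl⟩

/-- The one-sided shift on sequences.  Sequences are 0-indexed here: index `n`
stands for position `n+1` of the paper's sequences `{1,2,3,…} → 𝒜`. -/
def shift {𝒜 : Type*} (x : ℕ → 𝒜) : ℕ → 𝒜 := fun n => x (n + 1)

/-- `Z(ω,σ)`: the closure of the forward shift-orbit of `ω`. -/
def orbitClosure {𝒜 : Type*} [TopologicalSpace 𝒜] (ω : ℕ → 𝒜) : Set (ℕ → 𝒜) :=
  closure {y | ∃ n : ℕ, shift^[n] ω = y}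

/-- The Grigorchuk substitution sequence `ω^G` (0-indexed: `omegaG n` is the letter at
position `m = n+1`).  Writing `m = 2^k(2l+1)`: the letter is `a` if `k = 0`, and for
`k ≥ 1` it is `d`, `c`, or `b` according as `k ≡ 0, 1, 2 (mod 3)`. -/
def omegaG : ℕ → A := fun n =>
  if padicValNat 2 (n + 1) = 0 then A.a
  else if padicValNat 2 (n + 1) % 3 = 0 then A.d
  else if padicValNat 2 (n + 1) % 3 = 1 then A.c
  else A.b

namespace Grig

instance : Countable A := by
  rw [countable_iff_exists_injective]
  exact ⟨fun x => match x with | .a => 0 | .b => 1 | .c => 2 | .d => 3,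
    by intro x y h; cases x <;> cases y <;> simp_all⟩

/-- the letter attached to a 2-adic valuation level -/
def L : ℕ → A := fun k =>
  if k = 0 then A.a else if k % 3 = 0 then A.d else if k % 3 = 1 then A.c else A.b

lemma omegaG_eq (n : ℕ) : omegaG n = L (padicValNat 2 (n + 1)) := rfl

lemma L_ne_succ (j : ℕ) : L j ≠ L (j + 1) := by
  unfold L
  rcases Nat.eq_zero_or_pos j with hj | hj
  · subst hj; simp
  · have hj0 : j ≠ 0 := hj.ne'
    have hj1 : j + 1 ≠ 0 := by omega
    have h3 : j % 3 = 0 ∨ j % 3 = 1 ∨ j % 3 = 2 := by omega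
    rcases h3 with h | h | h <;>
      · have h' : (j + 1) % 3 = (j % 3 + 1) % 3 := by omega
        simp [hj0, hj1, h, h']

lemma mod_eq_iff_val {w j : ℕ} (hw : 0 < w) :
    w % 2 ^ (j + 1) = 2 ^ j ↔ padicValNat 2 w = j := by
  constructor
  · intro h
    have h1 : 2 ^ j ∣ w := by
      have hd := Nat.div_add_mod w (2 ^ (j + 1))
      rw [h] at hd
      refine ⟨2 * (w / 2 ^ (j + 1)) + 1, ?_⟩
      have : 2 ^ j * (2 * (w / 2 ^ (j + 1)) + 1) = 2 ^ (j + 1) * (w / 2 ^ (j + 1)) + 2 ^ j := by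
        ring
      omega
    have h2 : ¬ 2 ^ (j + 1) ∣ w := by
      intro hdvd
      have h0 : w % 2 ^ (j + 1) = 0 := Nat.mod_eq_zero_of_dvd hdvd
      rw [h0] at h
      exact (pow_ne_zero j (by norm_num)) h.symm
    have hle : j ≤ padicValNat 2 w := (padicValNat_dvd_iff_le hw.ne').mp h1
    have hlt : ¬ (j + 1 ≤ padicValNat 2 w) := fun hc =>
      h2 ((padicValNat_dvd_iff_le hw.ne').mpr hc)
    omega
  · intro h
    have h1 : 2 ^ j ∣ w := by rw [← h]; exact pow_padicValNat_dvd
    have h2 : ¬ 2 ^ (j + 1) ∣ w := fun hc => by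
      have := (padicValNat_dvd_iff_le hw.ne').mp hc; omega
    obtain ⟨u, rfl⟩ := h1
    have hu : ¬ 2 ∣ u := fun hc => h2 (by
      obtain ⟨t, rfl⟩ := hc
      exact ⟨t, by ring⟩)
    have hu' : u % 2 = 1 := by omega
    have : u = 2 * (u / 2) + 1 := by omega
    rw [this]
    have : 2 ^ j * (2 * (u / 2) + 1) = 2 ^ j + 2 ^ (j + 1) * (u / 2) := by ring
    rw [this, Nat.add_mul_mod_self_left, Nat.mod_eq_of_lt (by
      exact Nat.pow_lt_pow_right (by norm_num) (by omega))]


open PadicInt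

lemma dvd_sub_appr (z : ℤ_[2]) (K : ℕ) : (2 : ℤ_[2]) ^ K ∣ z - z.appr K := by
  have h := appr_spec K z
  rwa [Ideal.mem_span_singleton] at h

lemma two_cast : ((2 : ℕ) : ℤ_[2]) = (2 : ℤ_[2]) := by norm_num

lemma int_modEq_of_dvd {a b : ℤ} {K : ℕ} (h : (2 : ℤ_[2]) ^ K ∣ ((a : ℤ_[2]) - (b : ℤ_[2]))) :
    a ≡ b [ZMOD (2 ^ K : ℤ)] := by
  have h2 : (2 : ℤ_[2]) ^ K ∣ (((a - b : ℤ) : ℤ_[2])) := by push_cast; exact h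
  rw [← two_cast, pow_p_dvd_int_iff] at h2
  have h3 : ((2 : ℤ) ^ K) ∣ a - b := by exact_mod_cast h2
  exact (Int.modEq_iff_dvd.mpr (by omega)).symm

lemma dvd_of_int_modEq {a b : ℤ} {K : ℕ} (h : a ≡ b [ZMOD (2 ^ K : ℤ)]) :
    (2 : ℤ_[2]) ^ K ∣ ((a : ℤ_[2]) - (b : ℤ_[2])) := by
  obtain ⟨t, ht⟩ := Int.ModEq.dvd h.symm
  have : ((a : ℤ_[2]) - b) = ((a - b : ℤ) : ℤ_[2]) := by push_cast; ring
  rw [this, show a - b = 2 ^ K * t by omega]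
  push_cast
  exact ⟨t, rfl⟩

lemma appr_int_congr (z : ℤ_[2]) (K : ℕ) : (z.appr K : ℤ) ≡ (z.appr K : ℤ) [ZMOD 1] := by rfl

/-- `z.appr K' ≡ z.appr K (mod 2^K)` for `K ≤ K'` -/
lemma appr_congr (z : ℤ_[2]) {K K' : ℕ} (h : K ≤ K') :
    (z.appr K' : ℤ) ≡ (z.appr K : ℤ) [ZMOD (2 ^ K : ℤ)] := by
  apply int_modEq_of_dvd
  have h1 : (2 : ℤ_[2]) ^ K ∣ z - z.appr K' :=
    dvd_trans (pow_dvd_pow _ h) (dvd_sub_appr z K')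
  have h2 := dvd_sub_appr z K
  have : ((z.appr K' : ℤ) : ℤ_[2]) - ((z.appr K : ℤ) : ℤ_[2])
      = (z - z.appr K) - (z - z.appr K') := by push_cast; ring
  rw [this]
  exact dvd_sub h2 h1

lemma appr_eq_of_dvd {z z' : ℤ_[2]} {K : ℕ} (h : (2 : ℤ_[2]) ^ K ∣ z - z') :
    z.appr K = z'.appr K := by
  have h1 : ((z.appr K : ℤ) : ℤ_[2]) - ((z'.appr K : ℤ) : ℤ_[2])
      = (z - z'.appr K) - (z - z.appr K) := by push_cast; ring
  have h2 : (2 : ℤ_[2]) ^ K ∣ z - z'.appr K := by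
    have := dvd_sub_appr z' K
    have h3 : z - z'.appr K = (z - z') + (z' - z'.appr K) := by ring
    rw [h3]; exact dvd_add h this
  have hm : (z.appr K : ℤ) ≡ (z'.appr K : ℤ) [ZMOD (2 ^ K : ℤ)] := by
    apply int_modEq_of_dvd; rw [h1]; exact dvd_sub h2 (dvd_sub_appr z K)
  have l1 := appr_lt z K
  have l2 := appr_lt z' K
  have hK : (0 : ℤ) < 2 ^ K := by positivity
  rw [Int.ModEq] at hm
  have e1 : ((z.appr K : ℤ)) % 2 ^ K = z.appr K := Int.emod_eq_of_lt (by positivity) (by exact_mod_cast l1)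
  have e2 : ((z'.appr K : ℤ)) % 2 ^ K = z'.appr K := Int.emod_eq_of_lt (by positivity) (by exact_mod_cast l2)
  rw [e1, e2] at hm
  exact_mod_cast hm

lemma dvd_of_appr_eq {z z' : ℤ_[2]} {K : ℕ} (h : z.appr K = z'.appr K) :
    (2 : ℤ_[2]) ^ K ∣ z - z' := by
  have : z - z' = (z - z.appr K) - (z' - z'.appr K) := by rw [h]; ring
  rw [this]
  exact dvd_sub (dvd_sub_appr z K) (dvd_sub_appr z' K)

lemma norm_le_of_appr_eq {z z' : ℤ_[2]} {K : ℕ} (h : z.appr K = z'.appr K) :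
    ‖z - z'‖ ≤ ((2 : ℝ)) ^ (-(K : ℤ)) := by
  rw [show ((2:ℝ)) = ((2:ℕ):ℝ) by norm_num]
  rw [norm_le_pow_iff_mem_span_pow, Ideal.mem_span_singleton, two_cast]
  exact dvd_of_appr_eq h

lemma appr_eq_of_norm_le {z z' : ℤ_[2]} {K : ℕ} (h : ‖z - z'‖ ≤ ((2 : ℝ)) ^ (-(K : ℤ))) :
    z.appr K = z'.appr K := by
  apply appr_eq_of_dvd
  rw [← Ideal.mem_span_singleton, ← two_cast, ← norm_le_pow_iff_mem_span_pow]
  exact_mod_cast h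

/-- a nonzero 2-adic integer is `≡ 2^j (mod 2^{j+1})` for some `j` -/
lemma exists_level {w : ℤ_[2]} (hw : w ≠ 0) :
    ∃ j : ℕ, (2 : ℤ_[2]) ^ (j + 1) ∣ w - 2 ^ j := by
  refine ⟨w.valuation, ?_⟩
  have hs := unitCoeff_spec hw
  set j := w.valuation
  set u : ℤ_[2] := (unitCoeff hw : ℤ_[2])
  have hu : ¬ ((2 : ℤ_[2]) ∣ u) := by
    intro hdvd
    have h1 : ‖u‖ = 1 := norm_units _
    have h2 : ‖u‖ < 1 := by
      rw [show (1:ℝ) = ((2:ℕ):ℝ)^(0:ℤ) by norm_num]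
      have := norm_lt_one_iff_dvd u
      rw [two_cast] at this
      rw [show ((2:ℕ):ℝ)^(0:ℤ) = 1 by norm_num]
      exact this.mpr hdvd
    rw [h1] at h2; exact lt_irrefl _ h2
  -- u ≡ 1 mod 2
  have happr : u.appr 1 = 1 := by
    have hl := appr_lt u 1
    have hs1 := dvd_sub_appr u 1
    have hcases : u.appr 1 = 0 ∨ u.appr 1 = 1 := by omega
    rcases hcases with h | h
    · exfalso; apply hu
      rw [h] at hs1
      simpa using hs1
    · exact h
  have h1 : (2 : ℤ_[2]) ∣ u - 1 := by
    have := dvd_sub_appr u 1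
    rw [happr] at this
    simpa using this
  obtain ⟨t, ht⟩ := h1
  have : w - 2 ^ j = (u - 1) * 2 ^ j := by rw [hs]; ring
  rw [this, ht]
  exact ⟨t, by ring⟩

lemma cast_mod (a K : ℕ) : ((a % 2 ^ K : ℕ) : ℤ) = (a : ℤ) % (2 : ℤ) ^ K := by
  push_cast; ring_nf

lemma nat_mod_of_int {a r K : ℕ} (h : (a : ℤ) ≡ (r : ℤ) [ZMOD ((2 : ℤ) ^ K)])
    (hr : r < 2 ^ K) : a % 2 ^ K = r := by
  have h1 := cast_mod a K
  have h2 := cast_mod r K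
  have h' : (a : ℤ) % (2 : ℤ) ^ K = (r : ℤ) % (2 : ℤ) ^ K := h
  have h3 : (a % 2 ^ K : ℕ) = (r % 2 ^ K : ℕ) := by exact_mod_cast h1.trans (h'.trans h2.symm)
  rwa [Nat.mod_eq_of_lt hr] at h3

lemma int_of_nat_mod {a r K : ℕ} (h : a % 2 ^ K = r) :
    (a : ℤ) ≡ (r : ℤ) [ZMOD ((2 : ℤ) ^ K)] := by
  show (a : ℤ) % (2 : ℤ) ^ K = (r : ℤ) % (2 : ℤ) ^ K
  rw [← cast_mod a K, ← cast_mod r K]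
  norm_cast
  subst h
  rw [Nat.mod_eq_of_lt (Nat.mod_lt _ (by positivity))]

lemma shift_iterate {𝒜 : Type*} (x : ℕ → 𝒜) (n p : ℕ) : shift^[n] x p = x (p + n) := by
  induction n generalizing p with
  | zero => simp
  | succ n ih =>
    calc shift^[n+1] x p = shift (shift^[n] x) p := by rw [Function.iterate_succ_apply']
      _ = shift^[n] x (p + 1) := rfl
      _ = x (p + 1 + n) := ih (p + 1)
      _ = x (p + (n + 1)) := by congr 1; omega

/-- The fiber over `z`: sequences whose letters follow the 2-adic valuation pattern
of `p + 1 + z`. -/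
def Fiber (z : ℤ_[2]) : Set (ℕ → A) :=
  {x | ∀ j p : ℕ, (p + 1 + z.appr (j + 1)) % 2 ^ (j + 1) = 2 ^ j → x p = L j}

lemma fiber_shift {z : ℤ_[2]} {x : ℕ → A} (hx : x ∈ Fiber z) : shift x ∈ Fiber (z + 1) := by
  intro j p hcond
  have h1 : ((z + 1).appr (j + 1) : ℤ) ≡ (z.appr (j + 1) : ℤ) + 1 [ZMOD ((2:ℤ) ^ (j + 1))] := by
    apply int_modEq_of_dvd (a := ((z+1).appr (j+1) : ℤ)) (b := (z.appr (j+1) : ℤ) + 1)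
    have e : (((((z+1).appr (j+1)) : ℤ) : ℤ_[2])) - ((((z.appr (j+1) : ℤ) + 1) : ℤ) : ℤ_[2])
        = ((z + 1) - (z+1).appr (j+1)) * (-1) + (z - z.appr (j+1)) := by push_cast; ring
    rw [e]
    exact dvd_add (Dvd.dvd.mul_right (dvd_sub_appr (z+1) (j+1)) _) (dvd_sub_appr z (j+1))
  have h2 : ((p + 1 + 1 + z.appr (j + 1) : ℕ) : ℤ) ≡ ((p + 1 + (z + 1).appr (j + 1) : ℕ) : ℤ)
      [ZMOD ((2:ℤ) ^ (j + 1))] := by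
    push_cast
    calc (p:ℤ) + 1 + 1 + (z.appr (j+1) : ℤ) = (p:ℤ) + 1 + ((z.appr (j+1) : ℤ) + 1) := by ring
      _ ≡ (p:ℤ) + 1 + ((z+1).appr (j+1) : ℤ) [ZMOD ((2:ℤ) ^ (j + 1))] :=
          Int.ModEq.add_left _ h1.symm
  have hcond' : (p + 1 + 1 + z.appr (j + 1)) % 2 ^ (j + 1) = 2 ^ j := by
    apply nat_mod_of_int (h2.trans (int_of_nat_mod hcond))
    exact Nat.pow_lt_pow_right (by norm_num) (by omega)
  exact hx j (p + 1) hcond'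

lemma fiber_orbit (n : ℕ) : shift^[n] omegaG ∈ Fiber (n : ℤ_[2]) := by
  intro j p hcond
  rw [shift_iterate, omegaG_eq]
  have h1 : ((n : ℤ_[2]).appr (j + 1) : ℤ) ≡ (n : ℤ) [ZMOD ((2:ℤ) ^ (j + 1))] := by
    apply int_modEq_of_dvd
    have e : ((((n : ℤ_[2]).appr (j+1) : ℤ) : ℤ_[2])) - ((n : ℤ) : ℤ_[2])
        = ((n : ℤ_[2]) - (n : ℤ_[2]).appr (j+1)) * (-1) := by push_cast; ring
    rw [e]
    exact Dvd.dvd.mul_right (dvd_sub_appr _ _) _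
  have h2 : (p + n + 1) % 2 ^ (j + 1) = 2 ^ j := by
    apply nat_mod_of_int ?_ (Nat.pow_lt_pow_right (by norm_num) (by omega))
    calc ((p + n + 1 : ℕ) : ℤ) = (p:ℤ) + 1 + (n:ℤ) := by push_cast; ring
      _ ≡ (p:ℤ) + 1 + ((n : ℤ_[2]).appr (j+1) : ℤ) [ZMOD ((2:ℤ) ^ (j + 1))] :=
          Int.ModEq.add_left _ h1.symm
      _ = ((p + 1 + (n : ℤ_[2]).appr (j+1) : ℕ) : ℤ) := by push_cast; ring
      _ ≡ ((2 ^ j : ℕ) : ℤ) [ZMOD ((2:ℤ) ^ (j + 1))] := int_of_nat_mod hcond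
  rw [(mod_eq_iff_val (by omega)).mp h2]

lemma modEq_pow_zero (a b : ℕ) (h : a ≤ b) : (2:ℤ) ^ b ≡ 0 [ZMOD (2:ℤ) ^ a] :=
  (Int.modEq_iff_dvd).mpr (by rw [zero_sub]; exact (pow_dvd_pow 2 h).neg_right)

lemma neg_pow_modEq (j : ℕ) : -(2:ℤ) ^ j ≡ (2:ℤ) ^ j [ZMOD (2:ℤ) ^ (j+1)] :=
  (Int.modEq_iff_dvd).mpr ⟨1, by ring⟩

/-- Key separation lemma: two fiber points agreeing on a window of length `2^(k+2)`
have the same `k`-th approximations. -/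
lemma key {z z' : ℤ_[2]} {x y : ℕ → A} {k : ℕ} (hx : x ∈ Fiber z) (hy : y ∈ Fiber z')
    (h : ∀ p < 2 ^ (k + 2), x p = y p) : z.appr k = z'.appr k := by
  by_contra hne
  have hn := appr_lt z k
  have hm := appr_lt z' k
  set n := z.appr k with hnd
  set m := z'.appr k with hmd
  set d : ℕ := m + 2 ^ k - n with hd
  have hd0 : 0 < d := by omega
  have hpow : (2:ℕ) ^ (k+1) = 2 ^ k * 2 := pow_succ 2 k
  have hdlt : d < 2 ^ (k+1) := by omega
  set j := padicValNat 2 d with hj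
  have hjdvd : 2 ^ j ∣ d := by rw [hj]; exact pow_padicValNat_dvd
  have hjk : j < k := by
    by_contra hge
    push_neg at hge
    have hkd : 2 ^ k ∣ d := dvd_trans (pow_dvd_pow 2 hge) hjdvd
    obtain ⟨t, ht⟩ := hkd
    have hdek : d = 2 ^ k := by
      rcases Nat.lt_or_ge t 2 with h2 | h2
      · interval_cases t
        · omega
        · omega
      · have := Nat.mul_le_mul_left (2 ^ k) h2
        omega
    exact hne (by omega)
  have hdmod : d % 2 ^ (j + 1) = 2 ^ j := (mod_eq_iff_val hd0).mpr rfl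
  set N : ℤ := (z.appr (j+2) : ℤ) with hN
  set M : ℤ := (z'.appr (j+2) : ℤ) with hM
  set δ : ℤ := M - N with hδd
  -- δ ≡ 2^j mod 2^{j+1}
  have b1 : M ≡ (m:ℤ) [ZMOD (2:ℤ)^(j+1)] :=
    (appr_congr z' (by omega)).trans (appr_congr z' (by omega)).symm
  have b2 : N ≡ (n:ℤ) [ZMOD (2:ℤ)^(j+1)] :=
    (appr_congr z (by omega)).trans (appr_congr z (by omega)).symm
  have b3 : (m:ℤ) - n = (d:ℤ) - 2 ^ k := by
    have : (d:ℤ) = (m:ℤ) + 2 ^ k - n := by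
      rw [hd]; push_cast [Nat.cast_sub (by omega : n ≤ m + 2 ^ k)]; ring
    omega
  have b4 : (d:ℤ) ≡ (2:ℤ)^j [ZMOD (2:ℤ)^(j+1)] := by
    have := int_of_nat_mod hdmod
    push_cast at this
    exact this
  have hδ : δ ≡ (2:ℤ)^j [ZMOD (2:ℤ)^(j+1)] := by
    calc δ = M - N := hδd
      _ ≡ (m:ℤ) - n [ZMOD (2:ℤ)^(j+1)] := Int.ModEq.sub b1 b2
      _ = (d:ℤ) - 2 ^ k := b3
      _ ≡ (2:ℤ)^j - 0 [ZMOD (2:ℤ)^(j+1)] := Int.ModEq.sub b4 (modEq_pow_zero _ _ (by omega))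
      _ = (2:ℤ)^j := by ring
  -- choose p
  set tt : ℤ := ((2:ℤ)^(j+1) - δ - 1 - N).emod ((2:ℤ)^(j+2)) with htt
  have ht0 : 0 ≤ tt := Int.emod_nonneg _ (by positivity)
  have htlt : tt < (2:ℤ)^(j+2) := Int.emod_lt_of_pos _ (by positivity)
  set p : ℕ := tt.toNat with hpd
  have hp : (p : ℤ) = tt := Int.toNat_of_nonneg ht0
  have hplt : p < 2 ^ (k+2) := by
    have h1 : ((2:ℤ)^(j+2)) ≤ ((2:ℤ)^(k+2)) := pow_le_pow_right₀ (by norm_num) (by omega)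
    have : (p:ℤ) < (2:ℤ)^(k+2) := by omega
    exact_mod_cast this
  have hPmod : (p:ℤ) + 1 + N ≡ (2:ℤ)^(j+1) - δ [ZMOD (2:ℤ)^(j+2)] := by
    have h0 : tt ≡ (2:ℤ)^(j+1) - δ - 1 - N [ZMOD (2:ℤ)^(j+2)] :=
      Int.emod_emod_of_dvd _ dvd_rfl
    calc (p:ℤ) + 1 + N = tt + (1 + N) := by rw [hp]; ring
      _ ≡ ((2:ℤ)^(j+1) - δ - 1 - N) + (1 + N) [ZMOD (2:ℤ)^(j+2)] := Int.ModEq.add_right _ h0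
      _ = (2:ℤ)^(j+1) - δ := by ring
  -- the x side
  have c1 : (z.appr (j+1) : ℤ) - N ≡ 0 [ZMOD (2:ℤ)^(j+1)] := by
    have := (appr_congr z (by omega : j + 1 ≤ j + 2)).symm
    calc (z.appr (j+1) : ℤ) - N ≡ N - N [ZMOD (2:ℤ)^(j+1)] := Int.ModEq.sub_right _ this
      _ = 0 := by ring
  have c3 : (2:ℤ)^(j+1) - δ ≡ (2:ℤ)^j [ZMOD (2:ℤ)^(j+1)] := by
    calc (2:ℤ)^(j+1) - δ ≡ 0 - (2:ℤ)^j [ZMOD (2:ℤ)^(j+1)] :=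
        Int.ModEq.sub (modEq_pow_zero _ _ (le_refl _)) hδ
      _ = -(2:ℤ)^j := by ring
      _ ≡ (2:ℤ)^j [ZMOD (2:ℤ)^(j+1)] := neg_pow_modEq j
  have hWx : ((p + 1 + z.appr (j+1) : ℕ) : ℤ) ≡ ((2^j : ℕ) : ℤ) [ZMOD (2:ℤ)^(j+1)] := by
    push_cast
    calc (p:ℤ) + 1 + (z.appr (j+1) : ℤ)
        = ((p:ℤ) + 1 + N) + ((z.appr (j+1) : ℤ) - N) := by ring
      _ ≡ ((2:ℤ)^(j+1) - δ) + 0 [ZMOD (2:ℤ)^(j+1)] :=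
          Int.ModEq.add (hPmod.of_dvd (pow_dvd_pow 2 (by omega))) c1
      _ = (2:ℤ)^(j+1) - δ := by ring
      _ ≡ (2:ℤ)^j [ZMOD (2:ℤ)^(j+1)] := c3
  have hxp : x p = L j :=
    hx j p (nat_mod_of_int hWx (Nat.pow_lt_pow_right (by norm_num) (by omega)))
  -- the y side
  have hWy : ((p + 1 + z'.appr (j+2) : ℕ) : ℤ) ≡ ((2^(j+1) : ℕ) : ℤ) [ZMOD (2:ℤ)^(j+2)] := by
    push_cast
    calc (p:ℤ) + 1 + M = ((p:ℤ) + 1 + N) + δ := by rw [hδd]; ring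
      _ ≡ ((2:ℤ)^(j+1) - δ) + δ [ZMOD (2:ℤ)^(j+2)] := Int.ModEq.add_right _ hPmod
      _ = (2:ℤ)^(j+1) := by ring
  have hyp : y p = L (j+1) :=
    hy (j+1) p (nat_mod_of_int hWy (Nat.pow_lt_pow_right (by norm_num) (by omega)))
  rw [h p hplt] at hxp
  exact L_ne_succ j (hxp.symm.trans hyp)

/-- the cylinder of sequences agreeing with `x` on `[0,N)` -/
def window (x : ℕ → A) (N : ℕ) : Set (ℕ → A) := {y | ∀ p < N, y p = x p}

lemma isOpen_window (x : ℕ → A) (N : ℕ) : IsOpen (window x N) := by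
  have : window x N = ⋂ p ∈ Finset.range N, {y : ℕ → A | y p = x p} := by
    ext y
    simp only [window, Set.mem_iInter, Set.mem_setOf_eq, Finset.mem_range]
  rw [this]
  apply isOpen_biInter_finset
  intro p _
  show IsOpen ((fun y : ℕ → A => y p) ⁻¹' {z | z = x p})
  exact (continuous_apply p).isOpen_preimage _ (isOpen_discrete _)

lemma mem_window_self (x : ℕ → A) (N : ℕ) : x ∈ window x N := fun _ _ => rfl

lemma mem_orbitClosure_iff {x : ℕ → A} :
    x ∈ orbitClosure omegaG ↔ ∀ N : ℕ, ∃ n : ℕ, ∀ p < N, shift^[n] omegaG p = x p := by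
  constructor
  · intro hx N
    have := mem_closure_iff.mp hx (window x N) (isOpen_window x N) (mem_window_self x N)
    obtain ⟨y, hy1, ⟨n, rfl⟩⟩ := this
    exact ⟨n, hy1⟩
  · intro H
    rw [orbitClosure, mem_closure_iff]
    intro o ho hxo
    obtain ⟨I, u, hI, hsub⟩ := isOpen_pi_iff.mp ho x hxo
    set N := (I.sup id) + 1 with hN
    obtain ⟨n, hn⟩ := H N
    refine ⟨shift^[n] omegaG, hsub ?_, ⟨n, rfl⟩⟩
    intro i hi
    have hiN : i < N := by
      have : i ≤ I.sup id := Finset.le_sup (f := id) hi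
      omega
    rw [hn i hiN]
    exact (hI i hi).2

lemma shift_mem_orbitClosure {x : ℕ → A} (hx : x ∈ orbitClosure omegaG) :
    shift x ∈ orbitClosure omegaG := by
  have hcont : Continuous (shift : (ℕ → A) → (ℕ → A)) :=
    continuous_pi fun n => continuous_apply (n + 1)
  have hmaps : Set.MapsTo shift {y | ∃ n : ℕ, shift^[n] omegaG = y}
      {y | ∃ n : ℕ, shift^[n] omegaG = y} := by
    rintro y ⟨n, rfl⟩
    exact ⟨n + 1, by rw [Function.iterate_succ_apply']⟩
  exact hmaps.closure hcont hx

/-- every point of the orbit closure lies in some fiber -/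
lemma exists_fiber {x : ℕ → A} (hx : x ∈ orbitClosure omegaG) : ∃ z : ℤ_[2], x ∈ Fiber z := by
  have H := mem_orbitClosure_iff.mp hx
  choose nn hnn using fun k : ℕ => H (2 ^ (k + 2))
  set s : ℕ → ℤ_[2] := fun k => ((nn k : ℕ) : ℤ_[2]) with hs
  have hagree : ∀ k l : ℕ, k ≤ l → (s k).appr k = (s l).appr k := by
    intro k l hkl
    apply key (fiber_orbit (nn k)) (fiber_orbit (nn l))
    intro p hp
    rw [hnn k p hp, hnn l p (lt_of_lt_of_le hp
      (Nat.pow_le_pow_right (by norm_num) (by omega)))]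
  have hcauchy : CauchySeq s := by
    apply cauchySeq_of_le_geometric_two (C := 2)
    intro k
    have h1 : (s k).appr k = (s (k+1)).appr k := hagree k (k+1) (by omega)
    have h2 : ‖s k - s (k+1)‖ ≤ ((2:ℝ)) ^ (-(k:ℤ)) := norm_le_of_appr_eq h1
    rw [dist_eq_norm]
    calc ‖s k - s (k+1)‖ ≤ ((2:ℝ)) ^ (-(k:ℤ)) := h2
      _ = 1 / 2 ^ k := by
          rw [zpow_neg, zpow_natCast]
          ring
      _ ≤ 2 / 2 / 2 ^ k := by norm_num
  obtain ⟨z, hz⟩ := cauchySeq_tendsto_of_complete hcauchy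
  refine ⟨z, ?_⟩
  intro j p hcond
  obtain ⟨K0, hK0⟩ := Metric.tendsto_atTop.mp hz ((2:ℝ) ^ (-((j+1:ℕ)):ℤ)) (by positivity)
  set k := max K0 p with hk
  have h1 : dist (s k) z < (2:ℝ) ^ (-((j+1:ℕ)):ℤ) := hK0 k (le_max_left _ _)
  have happr : (s k).appr (j+1) = z.appr (j+1) :=
    appr_eq_of_norm_le (by rw [← dist_eq_norm]; exact h1.le)
  have hcond' : (p + 1 + (s k).appr (j+1)) % 2 ^ (j+1) = 2 ^ j := by rw [happr]; exact hcond
  have hfib := fiber_orbit (nn k) j p hcond'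
  have hplt : p < 2 ^ (k + 2) := by
    have h2 : p ≤ k := le_max_right _ _
    have h3 : k < 2 ^ k := Nat.lt_two_pow_self (n := k)
    have h4 : (2:ℕ) ^ k ≤ 2 ^ (k+2) := Nat.pow_le_pow_right (by norm_num) (by omega)
    omega
  rw [hnn k p hplt] at hfib
  exact hfib

lemma fiber_unique {z z' : ℤ_[2]} {x : ℕ → A} (hx : x ∈ Fiber z) (hx' : x ∈ Fiber z') :
    z = z' := by
  have hap : ∀ k, z.appr k = z'.appr k := fun k => key hx hx' (fun p _ => rfl)
  by_contra hne
  have h0 : (0:ℝ) < ‖z - z'‖ := by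
    rw [norm_pos_iff]
    exact sub_ne_zero.mpr hne
  obtain ⟨k, hkl⟩ := exists_pow_lt_of_lt_one h0 (by norm_num : (1:ℝ)/2 < 1)
  have hle := norm_le_of_appr_eq (hap k)
  have : ((2:ℝ)) ^ (-(k:ℤ)) = (1/2) ^ k := by
    rw [zpow_neg, zpow_natCast]
    simp [one_div, inv_pow]
  rw [this] at hle
  linarith

open scoped Classical in
/-- the odometer coordinate -/
noncomputable def f : (ℕ → A) → ℤ_[2] := fun x =>
  if h : ∃ z : ℤ_[2], x ∈ Fiber z then h.choose else 0

lemma f_spec {x : ℕ → A} {z : ℤ_[2]} (hx : x ∈ Fiber z) : f x = z := by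
  have h : ∃ w : ℤ_[2], x ∈ Fiber w := ⟨z, hx⟩
  rw [f]
  rw [dif_pos h]
  exact fiber_unique h.choose_spec hx

lemma mem_fiber_f {x : ℕ → A} (hx : x ∈ orbitClosure omegaG) : x ∈ Fiber (f x) := by
  obtain ⟨z, hz⟩ := exists_fiber hx
  rw [f_spec hz]
  exact hz

lemma exists_cond_of_ne_zero {z : ℤ_[2]} {p : ℕ} (hw : (p : ℤ_[2]) + 1 + z ≠ 0) :
    ∃ j : ℕ, (p + 1 + z.appr (j + 1)) % 2 ^ (j + 1) = 2 ^ j := by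
  obtain ⟨j, hj⟩ := exists_level hw
  refine ⟨j, ?_⟩
  apply nat_mod_of_int ?_ (Nat.pow_lt_pow_right (by norm_num) (by omega))
  apply int_modEq_of_dvd
  have e : (((p + 1 + z.appr (j + 1) : ℕ) : ℤ) : ℤ_[2]) - (((2 ^ j : ℕ) : ℤ) : ℤ_[2])
      = (((p : ℤ_[2]) + 1 + z) - 2 ^ j) - (z - z.appr (j + 1)) := by push_cast; ring
  rw [e]
  exact dvd_sub hj (dvd_sub_appr z (j + 1))

lemma determined {z : ℤ_[2]} {x y : ℕ → A} (hx : x ∈ Fiber z) (hy : y ∈ Fiber z)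
    (hnohole : ∀ p : ℕ, (p : ℤ_[2]) + 1 + z ≠ 0) : x = y := by
  funext p
  obtain ⟨j, hj⟩ := exists_cond_of_ne_zero (hnohole p)
  rw [hx j p hj, hy j p hj]

lemma fiber_countable (z : ℤ_[2]) : (Fiber z).Countable := by
  by_cases hh : ∃ p0 : ℕ, (p0 : ℤ_[2]) + 1 + z = 0
  · obtain ⟨p0, hp0⟩ := hh
    apply Set.MapsTo.countable_of_injOn (f := fun x : ℕ → A => x p0) (t := Set.univ)
      (Set.mapsTo_univ _ _) ?_ Set.countable_univ
    intro x hx y hy hxy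
    funext p
    by_cases hp : p = p0
    · subst hp; exact hxy
    · have hw : (p : ℤ_[2]) + 1 + z ≠ 0 := by
        intro hc
        have h1 : (p : ℤ_[2]) + 1 + z = (p0 : ℤ_[2]) + 1 + z := hc.trans hp0.symm
        have h2 : (p : ℤ_[2]) = (p0 : ℤ_[2]) := by
          have := add_right_cancel h1
          exact add_right_cancel this
        exact hp (Nat.cast_inj.mp h2)
      obtain ⟨j, hj⟩ := exists_cond_of_ne_zero hw
      rw [hx j p hj, hy j p hj]
  · push_neg at hh
    have hss : (Fiber z).Subsingleton := fun x hx y hy => determined hx hy hh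
    exact hss.countable

lemma cond_mono_unique {z : ℤ_[2]} {p j j' : ℕ} (hlt : j < j')
    (hj : (p + 1 + z.appr (j + 1)) % 2 ^ (j + 1) = 2 ^ j)
    (hj' : (p + 1 + z.appr (j' + 1)) % 2 ^ (j' + 1) = 2 ^ j') : False := by
  have h1 : ((p + 1 + z.appr (j' + 1) : ℕ) : ℤ) ≡ ((p + 1 + z.appr (j + 1) : ℕ) : ℤ)
      [ZMOD (2:ℤ) ^ (j + 1)] := by
    push_cast
    exact Int.ModEq.add_left _ (appr_congr z (by omega))
  have h2' : ((2 ^ j' : ℕ) : ℤ) ≡ ((p + 1 + z.appr (j + 1) : ℕ) : ℤ) [ZMOD (2:ℤ) ^ (j + 1)] :=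
    ((int_of_nat_mod hj').of_dvd (pow_dvd_pow 2 (by omega))).symm.trans h1
  have h3 := h2'.trans (int_of_nat_mod hj)
  have h4 : ((2:ℤ) ^ j' : ℤ) ≡ 0 [ZMOD (2:ℤ) ^ (j + 1)] := modEq_pow_zero _ _ (by omega)
  have h5 : ((2:ℤ) ^ j : ℤ) ≡ 0 [ZMOD (2:ℤ) ^ (j + 1)] := by
    have := (h4.symm.trans (by push_cast at h3 ⊢; exact h3))
    exact this.symm
  have h6 : (2:ℤ) ^ (j + 1) ∣ (2:ℤ) ^ j := by
    have := (Int.modEq_zero_iff_dvd).mp h5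
    exact this
  have h7 : (2:ℤ) ^ (j + 1) ≤ (2:ℤ) ^ j := Int.le_of_dvd (by positivity) h6
  have h8 : (2:ℤ) ^ j < (2:ℤ) ^ (j + 1) := by
    have : (2:ℤ) ^ (j+1) = 2 ^ j * 2 := pow_succ 2 j
    have hp' : (0:ℤ) < 2 ^ j := by positivity
    omega
  omega

lemma cond_unique {z : ℤ_[2]} {p j j' : ℕ}
    (hj : (p + 1 + z.appr (j + 1)) % 2 ^ (j + 1) = 2 ^ j)
    (hj' : (p + 1 + z.appr (j' + 1)) % 2 ^ (j' + 1) = 2 ^ j') : j = j' := by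
  rcases lt_trichotomy j j' with h | h | h
  · exact absurd (cond_mono_unique h hj hj') (fun hc => hc)
  · exact h
  · exact absurd (cond_mono_unique h hj' hj) (fun hc => hc)

/-- the canonical point of the fiber over `z` -/
noncomputable def xz (z : ℤ_[2]) : ℕ → A := fun p =>
  letI : Decidable (∃ j : ℕ, (p + 1 + z.appr (j + 1)) % 2 ^ (j + 1) = 2 ^ j) := Classical.dec _
  if h : ∃ j : ℕ, (p + 1 + z.appr (j + 1)) % 2 ^ (j + 1) = 2 ^ j then L (Nat.find h) else A.b

lemma xz_fiber (z : ℤ_[2]) : xz z ∈ Fiber z := by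
  intro j p hcond
  have h : ∃ j : ℕ, (p + 1 + z.appr (j + 1)) % 2 ^ (j + 1) = 2 ^ j := ⟨j, hcond⟩
  rw [xz]
  rw [dif_pos h]
  congr 1
  exact cond_unique (Nat.find_spec h) hcond

lemma xz_mem (z : ℤ_[2]) : xz z ∈ orbitClosure omegaG := by
  classical
  rw [mem_orbitClosure_iff]
  intro N
  set J := (Finset.range N).sup (fun p =>
    if h : ∃ j : ℕ, (p + 1 + z.appr (j + 1)) % 2 ^ (j + 1) = 2 ^ j then Nat.find h + 1 else 0)
    with hJ
  set K := 3 * (J + N + 2) + 2 with hKdef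
  have hK2 : K % 3 = 2 := by omega
  have hK0 : K ≠ 0 := by omega
  have hNK : N ≤ K := by omega
  have hN2K : N ≤ 2 ^ K := by
    have := Nat.lt_two_pow_self (n := K)
    omega
  refine ⟨z.appr K, ?_⟩
  intro p hp
  rw [shift_iterate, omegaG_eq]
  by_cases h : ∃ j : ℕ, (p + 1 + z.appr (j + 1)) % 2 ^ (j + 1) = 2 ^ j
  · have hj := Nat.find_spec h
    set j := Nat.find h with hjd
    have hjJ : j + 1 ≤ J := by
      have hmem : p ∈ Finset.range N := Finset.mem_range.mpr hp
      have := Finset.le_sup (f := fun p =>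
        if h : ∃ j : ℕ, (p + 1 + z.appr (j + 1)) % 2 ^ (j + 1) = 2 ^ j then Nat.find h + 1 else 0)
        hmem
      have h2 : (if h : ∃ j : ℕ, (p + 1 + z.appr (j + 1)) % 2 ^ (j + 1) = 2 ^ j
          then Nat.find h + 1 else 0) ≤ J := this
      rw [dif_pos h] at h2
      exact h2
    have hjK : j + 1 ≤ K := by omega
    have hc : (p + z.appr K + 1) % 2 ^ (j + 1) = 2 ^ j := by
      apply nat_mod_of_int ?_ (Nat.pow_lt_pow_right (by norm_num) (by omega))
      calc ((p + z.appr K + 1 : ℕ) : ℤ)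
          = ((p : ℤ) + 1) + (z.appr K : ℤ) := by push_cast; ring
        _ ≡ ((p : ℤ) + 1) + (z.appr (j+1) : ℤ) [ZMOD (2:ℤ) ^ (j+1)] :=
            Int.ModEq.add_left _ (appr_congr z hjK)
        _ = ((p + 1 + z.appr (j+1) : ℕ) : ℤ) := by push_cast; ring
        _ ≡ ((2 ^ j : ℕ) : ℤ) [ZMOD (2:ℤ) ^ (j+1)] := int_of_nat_mod hj
    rw [(mod_eq_iff_val (by omega)).mp hc]
    exact (xz_fiber z j p hj).symm
  · have hw : (p : ℤ_[2]) + 1 + z = 0 := by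
      by_contra hw
      exact h (exists_cond_of_ne_zero hw)
    have hdvd : (2:ℤ_[2]) ^ K ∣ (((p + z.appr K + 1 : ℕ) : ℤ) : ℤ_[2]) - ((0 : ℤ) : ℤ_[2]) := by
      have e : (((p + z.appr K + 1 : ℕ) : ℤ) : ℤ_[2]) - ((0 : ℤ) : ℤ_[2])
          = ((p : ℤ_[2]) + 1 + z) - (z - z.appr K) := by push_cast; ring
      rw [e, hw, zero_sub]
      exact (dvd_sub_appr z K).neg_right
    have hint : ((p + z.appr K + 1 : ℕ) : ℤ) ≡ 0 [ZMOD (2:ℤ) ^ K] := int_modEq_of_dvd hdvd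
    have hnat : 2 ^ K ∣ (p + z.appr K + 1) := by
      have h1 : ((2:ℤ) ^ K) ∣ ((p + z.appr K + 1 : ℕ) : ℤ) := by
        have := (Int.modEq_zero_iff_dvd).mp hint
        exact this
      exact_mod_cast h1
    have heq : p + z.appr K + 1 = 2 ^ K := by
      obtain ⟨t, ht⟩ := hnat
      have hlt : p + z.appr K + 1 < 2 ^ K * 2 := by
        have := appr_lt z K
        omega
      rcases Nat.lt_or_ge t 2 with h2 | h2
      · interval_cases t
        · omega
        · omega
      · have := Nat.mul_le_mul_left (2 ^ K) h2
        omega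
    rw [heq]
    have hval : padicValNat 2 (2 ^ K) = K := by
      simp [padicValNat.prime_pow]
    rw [hval]
    have hxzb : xz z p = A.b := by
      rw [xz]
      rw [dif_neg h]
    rw [hxzb]
    unfold L
    simp [hK0, hK2]

end Grig

/-- The subshift `σ|_{Z(ω^G,σ)}` is, up to a countable set, continuously conjugated to
the binary odometer `z ↦ z + 1` on `ℤ₂`. -/
theorem stmt0 :
    ∃ (Ω₁ : Set (ℕ → A)) (f : (ℕ → A) → ℤ_[2]),
      Ω₁ ⊆ orbitClosure omegaG ∧
      Ω₁.Countable ∧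
      ContinuousOn f (orbitClosure omegaG) ∧
      f '' orbitClosure omegaG = Set.univ ∧
      (∀ x ∈ orbitClosure omegaG, f (shift x) = f x + 1) ∧
      (∀ x ∈ orbitClosure omegaG \ Ω₁, shift x ∈ orbitClosure omegaG \ Ω₁) ∧
      Set.InjOn f (orbitClosure omegaG \ Ω₁) := by
  classical
  refine ⟨{x | x ∈ orbitClosure omegaG ∧ ∃ m : ℕ, Grig.f x + ((m : ℤ_[2]) + 1) = 0}, Grig.f,
    fun x hx => hx.1, ?_, ?_, ?_, ?_, ?_, ?_⟩
  · -- countable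
    have hsub : {x | x ∈ orbitClosure omegaG ∧ ∃ m : ℕ, Grig.f x + ((m : ℤ_[2]) + 1) = 0}
        ⊆ ⋃ m : ℕ, Grig.Fiber (-((m : ℤ_[2]) + 1)) := by
      rintro x ⟨hx, m, hm⟩
      refine Set.mem_iUnion.mpr ⟨m, ?_⟩
      have hfib := Grig.mem_fiber_f hx
      have hfx : Grig.f x = -((m : ℤ_[2]) + 1) := by
        have : Grig.f x + ((m : ℤ_[2]) + 1) = 0 := hm
        linear_combination this
      rwa [hfx] at hfib
    exact Set.Countable.mono hsub (Set.countable_iUnion fun m => Grig.fiber_countable _)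
  · -- continuity
    intro x hx
    rw [ContinuousWithinAt, Metric.tendsto_nhds]
    intro ε hε
    obtain ⟨k, hk⟩ := exists_pow_lt_of_lt_one hε (by norm_num : (1:ℝ)/2 < 1)
    have hU : Grig.window x (2 ^ (k + 2)) ∈ nhdsWithin x (orbitClosure omegaG) :=
      mem_nhdsWithin_of_mem_nhds
        ((Grig.isOpen_window x _).mem_nhds (Grig.mem_window_self x _))
    filter_upwards [hU, self_mem_nhdsWithin] with y hy hyΩ
    have happr : (Grig.f y).appr k = (Grig.f x).appr k :=
      Grig.key (Grig.mem_fiber_f hyΩ) (Grig.mem_fiber_f hx) (fun p hp => hy p hp)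
    calc dist (Grig.f y) (Grig.f x) = ‖Grig.f y - Grig.f x‖ := dist_eq_norm _ _
      _ ≤ (2:ℝ) ^ (-(k:ℤ)) := Grig.norm_le_of_appr_eq happr
      _ = (1/2) ^ k := by
          rw [zpow_neg, zpow_natCast]
          simp [one_div, inv_pow]
      _ < ε := hk
  · -- surjectivity
    apply Set.eq_univ_of_forall
    intro z
    exact ⟨Grig.xz z, Grig.xz_mem z, Grig.f_spec (Grig.xz_fiber z)⟩
  · -- equivariance
    intro x hx
    exact Grig.f_spec (Grig.fiber_shift (Grig.mem_fiber_f hx))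
  · -- invariance of the complement
    rintro x ⟨hx, hnx⟩
    refine ⟨Grig.shift_mem_orbitClosure hx, ?_⟩
    rintro ⟨-, m, hm⟩
    apply hnx
    refine ⟨hx, m + 1, ?_⟩
    have hsh : Grig.f (shift x) = Grig.f x + 1 := Grig.f_spec (Grig.fiber_shift (Grig.mem_fiber_f hx))
    rw [hsh] at hm
    push_cast
    linear_combination hm
  · -- injectivity off Ω₁
    rintro x ⟨hx, hnx⟩ y ⟨hy, hny⟩ hfeq
    have hxf := Grig.mem_fiber_f hx
    have hyf : y ∈ Grig.Fiber (Grig.f x) := by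
      rw [hfeq]
      exact Grig.mem_fiber_f hy
    have hnohole : ∀ p : ℕ, (p : ℤ_[2]) + 1 + Grig.f x ≠ 0 := by
      intro p hc
      apply hnx
      refine ⟨hx, p, ?_⟩
      linear_combination hc
    exact Grig.determined hxf hyf hnohole
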